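/- Let H be a finite graph (possibly with loops), c ≥ 1 and t ≥ 0 integers. If χ(E_c(H)) ≤ c + t, then E_c(H) admits a suited proper (c+t)-coloring, i.e., a proper coloring Ψ of E_c(H) with colors {1,…,c+t} such that for every map φ ∈ V(E_c(H)), Ψ(φ) ∈ im(φ) ∪ {c+1,…,c+t}. -/

import Mathlib

/-- Two maps `φ₁ φ₂ : V → C` are co-proper relative to an adjacency relation `Adj` on `V`
if `φ₁ u ≠ φ₂ v` whenever `u` is adjacent to `v`. Co-proper pairs of maps `V → Fin c` are
exactly the adjacent pairs of vertices in the exponential graph `E_c(H)`. -/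
def CoProper {V C : Type*} (Adj : V → V → Prop) (φ₁ φ₂ : V → C) : Prop :=
  ∀ u v, Adj u v → φ₁ u ≠ φ₂ v

/-- If the exponential graph `E_c(H)` is `(c+t)`-colorable, then it has a suited proper
`(c+t)`-coloring: a proper coloring `Ψ` such that whenever `Ψ φ` is a primary color
(one of the first `c` colors), the value `Ψ φ` lies in the image of `φ`. -/
theorem exists_suited_coloring {V : Type*} [Fintype V]
    (Adj : V → V → Prop) (hsymm : Symmetric Adj) (c t : ℕ) (hc : 1 ≤ c)
    (h : ∃ Ψ : (V → Fin c) → Fin (c + t),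
      ∀ φ₁ φ₂, CoProper Adj φ₁ φ₂ → Ψ φ₁ ≠ Ψ φ₂) :
    ∃ Ψ : (V → Fin c) → Fin (c + t),
      (∀ φ₁ φ₂, CoProper Adj φ₁ φ₂ → Ψ φ₁ ≠ Ψ φ₂) ∧
      (∀ φ : V → Fin c, (Ψ φ : ℕ) < c → ∃ v : V, (φ v : ℕ) = (Ψ φ : ℕ)) := by
  classical
  obtain ⟨Ψ, hΨ⟩ := h
  -- constant maps
  set κ : Fin c → (V → Fin c) := fun i _ => i with hκ
  -- g i = color of constant map i
  set g : Fin c → Fin (c + t) := fun i => Ψ (κ i) with hg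
  -- g is injective
  have hginj : Function.Injective g := by
    intro i j hij
    by_contra hne
    exact hΨ (κ i) (κ j) (fun u v _ => by simpa using hne) hij
  -- equivalence from range of g to primary colors
  let e2 : Fin c ≃ {x : Fin (c + t) // (x : ℕ) < c} :=
    { toFun := fun i => ⟨Fin.castLE (Nat.le_add_right c t) i, i.isLt⟩
      invFun := fun x => ⟨(x : Fin (c + t)), x.2⟩
      left_inv := fun i => rfl
      right_inv := fun x => rfl }
  let e : {x : Fin (c + t) // x ∈ Set.range g} ≃ {x : Fin (c + t) // (x : ℕ) < c} :=
    (Equiv.ofInjective g hginj).symm.trans e2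
  let σ : Equiv.Perm (Fin (c + t)) := e.extendSubtype
  have hσg : ∀ i : Fin c, σ (g i) = Fin.castLE (Nat.le_add_right c t) i := by
    intro i
    have hmem : g i ∈ Set.range g := ⟨i, rfl⟩
    have h1 : σ (g i) = (e ⟨g i, hmem⟩ : Fin (c + t)) := e.extendSubtype_apply_of_mem _ hmem
    have h2 : (Equiv.ofInjective g hginj).symm ⟨g i, hmem⟩ = i :=
      Equiv.ofInjective_symm_apply hginj i
    rw [h1]
    show ((e2 ((Equiv.ofInjective g hginj).symm ⟨g i, hmem⟩)) : Fin (c + t)) = _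
    rw [h2]
    rfl
  refine ⟨fun φ => σ (Ψ φ), fun φ₁ φ₂ hcp => fun heq => hΨ φ₁ φ₂ hcp (σ.injective heq), ?_⟩
  intro φ hlt
  by_contra hno
  push_neg at hno
  set i : Fin c := ⟨(σ (Ψ φ) : ℕ), hlt⟩ with hi
  -- κ i and φ are co-proper
  have hcp : CoProper Adj (κ i) φ := by
    intro u v _ heq
    exact hno v (by simp [κ, ← heq]; rfl)
  have hne := hΨ (κ i) φ hcp
  apply hne
  have : σ (g i) = σ (Ψ φ) := by
    rw [hσg i]
    exact Fin.ext rfl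
  exact σ.injective this
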